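/- Let g : [xL, xR] → [xL, xR] and f : [x̄L, x̄R] → [x̄L, x̄R] be increasing homeomorphisms with g(x) < x on (xL, xR), f(x) > x on (x̄L, x̄R), and whose only fixed points are the endpoints. Then there exists a (decreasing) homeomorphism h : [x̄L, x̄R] → [xL, xR] with g ∘ h = h ∘ f. -/

import Mathlib

open Set Filter Topology


private lemma perm_inv_strictMono {α : Type*} [LinearOrder α] (e : Equiv.Perm α)
    (he : StrictMono ⇑e) : StrictMono ⇑e⁻¹ := by
  intro x y hxy
  rcases lt_trichotomy (e⁻¹ x) (e⁻¹ y) with h | h | h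
  · exact h
  · exfalso; rw [← (show e (e⁻¹ x) = x from Equiv.apply_symm_apply e x), ← (show e (e⁻¹ y) = y from Equiv.apply_symm_apply e y), h] at hxy
    exact lt_irrefl _ hxy
  · have := he h
    simp only [(show ∀ z, e (e⁻¹ z) = z from fun z => Equiv.apply_symm_apply e z)] at this
    exact absurd hxy (not_lt.2 this.le)

private lemma perm_zpow_strictMono {α : Type*} [LinearOrder α] (e : Equiv.Perm α)
    (he : StrictMono ⇑e) : ∀ n : ℤ, StrictMono ⇑(e ^ n) := by
  have hpow : ∀ k : ℕ, StrictMono ⇑(e ^ k) := by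
    intro k
    induction k with
    | zero => simpa using strictMono_id
    | succ k ih =>
      rw [pow_succ]
      exact fun x y hxy => ih (he hxy)
  intro n
  cases n with
  | ofNat k => simpa using hpow k
  | negSucc k =>
    rw [zpow_negSucc]
    exact perm_inv_strictMono _ (hpow (k + 1))

private lemma perm_zpow_fix {α : Type*} (e : Equiv.Perm α) {x : α} (hx : e x = x) :
    ∀ n : ℤ, (e ^ n) x = x := by
  have hpow : ∀ k : ℕ, (e ^ k) x = x := by
    intro k
    induction k with
    | zero => simp
    | succ k ih => rw [pow_succ]; simp [hx, ih]
  intro n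
  cases n with
  | ofNat k => simpa using hpow k
  | negSucc k =>
    rw [zpow_negSucc]
    have := hpow (k + 1)
    exact (Equiv.symm_apply_eq _).2 (by simp [this])

private lemma contOn_mono_surj {h : ℝ → ℝ} {a b c d : ℝ}
    (hm : StrictMonoOn h (Icc a b)) (hsd : SurjOn h (Icc a b) (Icc c d))
    (hmt : MapsTo h (Icc a b) (Icc c d)) : ContinuousOn h (Icc a b) := by
  intro x hx
  have hab : a ≤ b := hx.1.trans hx.2
  have hright : x < b → ContinuousWithinAt h (Ici x) x := by
    intro hxb
    apply hm.continuousWithinAt_right_of_exists_between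
    · exact Filter.mem_of_superset (Icc_mem_nhdsGE_of_mem ⟨le_rfl, hxb⟩) (Icc_subset_Icc hx.1 le_rfl)
    · intro y hy
      have hhx : h x < d := lt_of_lt_of_le (hm hx ⟨hab, le_rfl⟩ hxb) (hmt ⟨hab, le_rfl⟩).2
      have hv : min y d ∈ Icc c d := ⟨le_min (le_trans (hmt hx).1 (le_of_lt hy)) (le_trans (hmt hx).1 hhx.le), min_le_right _ _⟩
      obtain ⟨z, hz, hzv⟩ := hsd hv
      exact ⟨z, hz, by rw [hzv]; exact ⟨lt_min hy hhx, min_le_left _ _⟩⟩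
  have hleft : a < x → ContinuousWithinAt h (Iic x) x := by
    intro hax
    apply hm.continuousWithinAt_left_of_exists_between
    · exact Filter.mem_of_superset (Icc_mem_nhdsLE_of_mem ⟨hax, le_rfl⟩) (Icc_subset_Icc le_rfl hx.2)
    · intro y hy
      have hhx : c < h x := lt_of_le_of_lt (hmt ⟨le_rfl, hab⟩).1 (hm ⟨le_rfl, hab⟩ hx hax)
      have hv : max y c ∈ Icc c d := ⟨le_max_right _ _, max_le (le_trans hy.le (hmt hx).2) (le_trans hhx.le (hmt hx).2)⟩
      obtain ⟨z, hz, hzv⟩ := hsd hv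
      exact ⟨z, hz, by rw [hzv]; exact ⟨le_max_left _ _, max_lt hy hhx⟩⟩
  rcases eq_or_lt_of_le hx.1 with h1 | h1
  · rcases eq_or_lt_of_le hx.2 with h2 | h2
    · -- a = x = b : singleton
      have : Icc a b = {x} := by rw [h1, ← h2]; simp
      rw [this]
      exact continuousWithinAt_singleton
    · exact (hright h2).mono (by rw [← h1]; exact fun y hy => hy.1)
  · rcases eq_or_lt_of_le hx.2 with h2 | h2
    · exact (hleft h1).mono (by rw [h2]; exact fun y hy => hy.2)
    · exact ((hleft h1).union (hright h2)).mono (fun y _ => le_total y x)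


private lemma orbit_covering (f : ℝ → ℝ) (p q : ℝ)
    (hfc : ContinuousOn f (Icc p q))
    (hffix : ∀ x ∈ Icc p q, f x = x ↔ x = p ∨ x = q)
    (A : ℤ → ℝ) (hA : StrictMono A) (hmem : ∀ n, A n ∈ Ioo p q)
    (hstep : ∀ n, f (A n) = A (n + 1)) :
    ∀ x ∈ Ioo p q, (∃ n, A n < x) ∧ (∃ n, x < A n) := by
  have hub : ∀ n, A n ≤ q := fun n => (hmem n).2.le
  have hlb : ∀ n, p ≤ A n := fun n => (hmem n).1.le
  have hbddA : BddAbove (range A) := ⟨q, by rintro _ ⟨n, rfl⟩; exact hub n⟩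
  have hbddB : BddBelow (range A) := ⟨p, by rintro _ ⟨n, rfl⟩; exact hlb n⟩
  -- sup
  set L := ⨆ n, A n with hLdef
  have hT : Tendsto A atTop (𝓝 L) := tendsto_atTop_ciSup hA.monotone hbddA
  have hL0 : A 0 ≤ L := le_ciSup hbddA 0
  have hLq : L ≤ q := ciSup_le hub
  have hLmem : L ∈ Icc p q := ⟨(hlb 0).trans hL0, hLq⟩
  have hTin : Tendsto A atTop (𝓝[Icc p q] L) :=
    tendsto_nhdsWithin_iff.2 ⟨hT, Eventually.of_forall fun n => Ioo_subset_Icc_self (hmem n)⟩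
  have hfT : Tendsto (fun n => f (A n)) atTop (𝓝 (f L)) :=
    ((hfc L hLmem).tendsto).comp hTin
  have hshift : Tendsto (fun n : ℤ => A (n + 1)) atTop (𝓝 L) :=
    hT.comp (tendsto_atTop_add_const_right atTop 1 tendsto_id)
  have hfL : f L = L := by
    have : (fun n : ℤ => f (A n)) = fun n : ℤ => A (n + 1) := funext hstep
    rw [this] at hfT
    exact tendsto_nhds_unique hfT hshift
  have hLq' : L = q := by
    rcases (hffix L hLmem).1 hfL with h | h
    · exact absurd (h ▸ ((hmem 0).1.trans_le hL0)) (lt_irrefl p)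
    · exact h
  -- inf
  set M := ⨅ n, A n with hMdef
  have hTb : Tendsto A atBot (𝓝 M) := tendsto_atBot_ciInf hA.monotone hbddB
  have hM0 : M ≤ A 0 := ciInf_le hbddB 0
  have hpM : p ≤ M := le_ciInf hlb
  have hMmem : M ∈ Icc p q := ⟨hpM, hM0.trans (hub 0)⟩
  have hTbshift : Tendsto (fun n : ℤ => A (n - 1)) atBot (𝓝[Icc p q] M) :=
    tendsto_nhdsWithin_iff.2
      ⟨hTb.comp (tendsto_atBot_add_const_right atBot (-1) tendsto_id),
       Eventually.of_forall fun n => Ioo_subset_Icc_self (hmem _)⟩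
  have hfTb : Tendsto (fun n : ℤ => f (A (n - 1))) atBot (𝓝 (f M)) :=
    ((hfc M hMmem).tendsto).comp hTbshift
  have hfM : f M = M := by
    have : (fun n : ℤ => f (A (n - 1))) = fun n : ℤ => A n := by
      funext n; rw [hstep]; ring_nf
    rw [this] at hfTb
    exact tendsto_nhds_unique hfTb hTb
  have hMp : M = p := by
    rcases (hffix M hMmem).1 hfM with h | h
    · exact h
    · exact absurd (hM0.trans_lt ((hmem 0).2.trans_eq h.symm)) (lt_irrefl M)
  intro x hx
  constructor
  · exact exists_lt_of_ciInf_lt (by rw [← hMdef, hMp]; exact hx.1)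
  · exact exists_lt_of_lt_ciSup (by rw [← hLdef, hLq']; exact hx.2)

noncomputable def zact (g : ℝ → ℝ) (r s : ℝ) (hgB : BijOn g (Icc r s) (Icc r s)) :
    ℤ → ℝ → ℝ :=
  fun n y => if hy : y ∈ Icc r s then (((hgB.equiv g) ^ n) ⟨y, hy⟩ : ℝ) else y

section zact
variable {g : ℝ → ℝ} {r s : ℝ} (hgB : BijOn g (Icc r s) (Icc r s))

lemma zact_mem {y : ℝ} (hy : y ∈ Icc r s) (n : ℤ) : zact g r s hgB n y ∈ Icc r s := by
  rw [zact, dif_pos hy]; exact Subtype.mem _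

lemma zact_add {y : ℝ} (hy : y ∈ Icc r s) (m n : ℤ) :
    zact g r s hgB m (zact g r s hgB n y) = zact g r s hgB (m + n) y := by
  have h1 := zact_mem hgB hy n
  simp only [zact, dif_pos hy]
  rw [dif_pos (Subtype.coe_prop _), Subtype.coe_eta, ← Equiv.Perm.mul_apply, ← zpow_add]

lemma zact_zero {y : ℝ} (hy : y ∈ Icc r s) : zact g r s hgB 0 y = y := by
  rw [zact, dif_pos hy]; simp

lemma zact_one {y : ℝ} (hy : y ∈ Icc r s) : zact g r s hgB 1 y = g y := by
  rw [zact, dif_pos hy, zpow_one]; rfl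

lemma zact_conj {y : ℝ} (hy : y ∈ Icc r s) (n : ℤ) :
    g (zact g r s hgB n y) = zact g r s hgB (n + 1) y := by
  rw [← zact_one hgB (zact_mem hgB hy n), zact_add hgB hy, add_comm]

lemma zact_strictMonoOn (hgm : StrictMonoOn g (Icc r s)) (n : ℤ) :
    StrictMonoOn (zact g r s hgB n) (Icc r s) := by
  have he : StrictMono ⇑(hgB.equiv g) := by
    intro x y hxy
    have : (((hgB.equiv g) x : ℝ)) = g x := rfl
    show (((hgB.equiv g) x : ℝ)) < ((hgB.equiv g) y : ℝ)
    exact hgm x.2 y.2 (Subtype.coe_lt_coe.2 hxy)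
  intro x hx y hy hxy
  simp only [zact, dif_pos hx, dif_pos hy]
  exact Subtype.coe_lt_coe.2 (perm_zpow_strictMono _ he n (Subtype.coe_lt_coe.1 hxy))

lemma zact_fix {y : ℝ} (hy : y ∈ Icc r s) (hfix : g y = y) (n : ℤ) :
    zact g r s hgB n y = y := by
  rw [zact, dif_pos hy]
  have : (hgB.equiv g) ⟨y, hy⟩ = ⟨y, hy⟩ := Subtype.ext hfix
  rw [perm_zpow_fix _ this]

end zact

private lemma conj_mono (f g : ℝ → ℝ) (p q r s : ℝ) (hpq : p < q) (hrs : r < s)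
    (hfc : ContinuousOn f (Icc p q)) (hfm : StrictMonoOn f (Icc p q))
    (hfB : BijOn f (Icc p q) (Icc p q))
    (hfd : ∀ x ∈ Ioo p q, x < f x)
    (hffix : ∀ x ∈ Icc p q, f x = x ↔ x = p ∨ x = q)
    (hgc : ContinuousOn g (Icc r s)) (hgm : StrictMonoOn g (Icc r s))
    (hgB : BijOn g (Icc r s) (Icc r s))
    (hgd : ∀ x ∈ Ioo r s, x < g x)
    (hgfix : ∀ x ∈ Icc r s, g x = x ↔ x = r ∨ x = s) :
    ∃ H : ℝ → ℝ, StrictMonoOn H (Icc p q) ∧ BijOn H (Icc p q) (Icc r s) ∧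
      ∀ x ∈ Icc p q, g (H x) = H (f x) := by
  classical
  have hfp : f p = p := (hffix p ⟨le_rfl, hpq.le⟩).2 (Or.inl rfl)
  have hfq : f q = q := (hffix q ⟨hpq.le, le_rfl⟩).2 (Or.inr rfl)
  have hgr : g r = r := (hgfix r ⟨le_rfl, hrs.le⟩).2 (Or.inl rfl)
  have hgs : g s = s := (hgfix s ⟨hrs.le, le_rfl⟩).2 (Or.inr rfl)
  set F := zact f p q hfB with hFdef
  set G := zact g r s hgB with hGdef
  have hFmem : ∀ {y : ℝ}, y ∈ Icc p q → ∀ n, F n y ∈ Icc p q := fun hy n => zact_mem hfB hy n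
  have hGmem : ∀ {y : ℝ}, y ∈ Icc r s → ∀ n, G n y ∈ Icc r s := fun hy n => zact_mem hgB hy n
  have hFadd : ∀ {y : ℝ}, y ∈ Icc p q → ∀ m n, F m (F n y) = F (m + n) y :=
    fun hy m n => zact_add hfB hy m n
  have hGadd : ∀ {y : ℝ}, y ∈ Icc r s → ∀ m n, G m (G n y) = G (m + n) y :=
    fun hy m n => zact_add hgB hy m n
  have hFzero : ∀ {y : ℝ}, y ∈ Icc p q → F 0 y = y := fun hy => zact_zero hfB hy
  have hGzero : ∀ {y : ℝ}, y ∈ Icc r s → G 0 y = y := fun hy => zact_zero hgB hy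
  have hFone : ∀ {y : ℝ}, y ∈ Icc p q → F 1 y = f y := fun hy => zact_one hfB hy
  have hGone : ∀ {y : ℝ}, y ∈ Icc r s → G 1 y = g y := fun hy => zact_one hgB hy
  have hFconj : ∀ {y : ℝ}, y ∈ Icc p q → ∀ n, f (F n y) = F (n + 1) y :=
    fun hy n => zact_conj hfB hy n
  have hGconj : ∀ {y : ℝ}, y ∈ Icc r s → ∀ n, g (G n y) = G (n + 1) y :=
    fun hy n => zact_conj hgB hy n
  have hFmono : ∀ n, StrictMonoOn (F n) (Icc p q) := fun n => zact_strictMonoOn hfB hfm n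
  have hGmono : ∀ n, StrictMonoOn (G n) (Icc r s) := fun n => zact_strictMonoOn hgB hgm n
  have hFfix : ∀ {y : ℝ}, y ∈ Icc p q → f y = y → ∀ n, F n y = y :=
    fun hy hfix n => zact_fix hfB hy hfix n
  have hGfix : ∀ {y : ℝ}, y ∈ Icc r s → g y = y → ∀ n, G n y = y :=
    fun hy hfix n => zact_fix hgB hy hfix n
  clear_value F G
  have hm0f : (p + q) / 2 ∈ Ioo p q := ⟨by linarith, by linarith⟩
  have hm0g : (r + s) / 2 ∈ Ioo r s := ⟨by linarith, by linarith⟩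
  have hm0fI : (p + q) / 2 ∈ Icc p q := Ioo_subset_Icc_self hm0f
  have hm0gI : (r + s) / 2 ∈ Icc r s := Ioo_subset_Icc_self hm0g
  set A : ℤ → ℝ := fun n => F n ((p + q) / 2) with hAdef
  set B : ℤ → ℝ := fun n => G n ((r + s) / 2) with hBdef
  have hAn : ∀ n, A n = F n ((p + q) / 2) := fun n => rfl
  have hBn : ∀ n, B n = G n ((r + s) / 2) := fun n => rfl
  clear_value A B
  have hAIcc : ∀ n, A n ∈ Icc p q := fun n => (hAn n) ▸ hFmem hm0fI n
  have hBIcc : ∀ n, B n ∈ Icc r s := fun n => (hBn n) ▸ hGmem hm0gI n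
  have hFA : ∀ m n, F m (A n) = A (m + n) := fun m n => by
    rw [hAn, hFadd hm0fI, hAn]
  have hGB : ∀ m n, G m (B n) = B (m + n) := fun m n => by
    rw [hBn, hGadd hm0gI, hBn]
  have hAmem : ∀ n, A n ∈ Ioo p q := by
    intro n
    refine ⟨lt_of_le_of_ne (hAIcc n).1 ?_, lt_of_le_of_ne (hAIcc n).2 ?_⟩
    · intro h
      have h1 : F (-n) (A n) = (p + q) / 2 := by
        rw [hFA, show (-n + n : ℤ) = 0 by ring, hAn, ← hAn 0,
          show A 0 = F 0 ((p+q)/2) from hAn 0, hFzero hm0fI]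
      rw [← h, hFfix ⟨le_rfl, hpq.le⟩ hfp] at h1
      linarith [hm0f.1, hm0f.2]
    · intro h
      have h1 : F (-n) (A n) = (p + q) / 2 := by
        rw [hFA, show (-n + n : ℤ) = 0 by ring, hAn 0, hFzero hm0fI]
      rw [h, hFfix ⟨hpq.le, le_rfl⟩ hfq] at h1
      linarith [hm0f.1, hm0f.2]
  have hBmem : ∀ n, B n ∈ Ioo r s := by
    intro n
    refine ⟨lt_of_le_of_ne (hBIcc n).1 ?_, lt_of_le_of_ne (hBIcc n).2 ?_⟩
    · intro h
      have h1 : G (-n) (B n) = (r + s) / 2 := by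
        rw [hGB, show (-n + n : ℤ) = 0 by ring, hBn 0, hGzero hm0gI]
      rw [← h, hGfix ⟨le_rfl, hrs.le⟩ hgr] at h1
      linarith [hm0g.1, hm0g.2]
    · intro h
      have h1 : G (-n) (B n) = (r + s) / 2 := by
        rw [hGB, show (-n + n : ℤ) = 0 by ring, hBn 0, hGzero hm0gI]
      rw [h, hGfix ⟨hrs.le, le_rfl⟩ hgs] at h1
      linarith [hm0g.1, hm0g.2]
  have hAstep : ∀ n, f (A n) = A (n + 1) := fun n => by
    rw [hAn, hFconj hm0fI, hAn]
  have hBstep : ∀ n, g (B n) = B (n + 1) := fun n => by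
    rw [hBn, hGconj hm0gI, hBn]
  have hAmono : StrictMono A := strictMono_int_of_lt_succ fun n => by
    rw [← hAstep n]; exact hfd _ (hAmem n)
  have hBmono : StrictMono B := strictMono_int_of_lt_succ fun n => by
    rw [← hBstep n]; exact hgd _ (hBmem n)
  have hcovA := orbit_covering f p q hfc hffix A hAmono hAmem hAstep
  have hcovB := orbit_covering g r s hgc hgfix B hBmono hBmem hBstep
  -- block existence
  have hNexA : ∀ x ∈ Ioo p q, ∃ n, A n ≤ x ∧ x < A (n + 1) := by
    intro x hx
    obtain ⟨⟨n0, hn0⟩, ⟨m1, hm1⟩⟩ := hcovA x hx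
    have hSne : {n : ℤ | A n ≤ x}.Nonempty := ⟨n0, hn0.le⟩
    have hSbdd : BddAbove {n : ℤ | A n ≤ x} :=
      ⟨m1, fun k hk => (hAmono.lt_iff_lt.1 (lt_of_le_of_lt hk hm1)).le⟩
    have hmem := Int.csSup_mem hSne hSbdd
    refine ⟨sSup {n : ℤ | A n ≤ x}, hmem, ?_⟩
    by_contra hcon
    push_neg at hcon
    have := le_csSup hSbdd (show sSup {n : ℤ | A n ≤ x} + 1 ∈ {n : ℤ | A n ≤ x} from hcon)
    omega
  have hNexB : ∀ y ∈ Ioo r s, ∃ n, B n ≤ y ∧ y < B (n + 1) := by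
    intro y hy
    obtain ⟨⟨n0, hn0⟩, ⟨m1, hm1⟩⟩ := hcovB y hy
    have hSne : {n : ℤ | B n ≤ y}.Nonempty := ⟨n0, hn0.le⟩
    have hSbdd : BddAbove {n : ℤ | B n ≤ y} :=
      ⟨m1, fun k hk => (hBmono.lt_iff_lt.1 (lt_of_le_of_lt hk hm1)).le⟩
    have hmem := Int.csSup_mem hSne hSbdd
    refine ⟨sSup {n : ℤ | B n ≤ y}, hmem, ?_⟩
    by_contra hcon
    push_neg at hcon
    have := le_csSup hSbdd (show sSup {n : ℤ | B n ≤ y} + 1 ∈ {n : ℤ | B n ≤ y} from hcon)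
    omega
  -- fundamental-domain map
  have hA01 : A 0 < A 1 := hAmono (by norm_num)
  have hB01 : B 0 < B 1 := hBmono (by norm_num)
  set h0 : ℝ → ℝ := fun t => B 0 + (t - A 0) * ((B 1 - B 0) / (A 1 - A 0)) with hh0def
  have hh0 : ∀ t, h0 t = B 0 + (t - A 0) * ((B 1 - B 0) / (A 1 - A 0)) := fun t => rfl
  clear_value h0
  have hslope : 0 < (B 1 - B 0) / (A 1 - A 0) := div_pos (by linarith) (by linarith)
  have h0mono : StrictMono h0 := fun u v huv => by
    rw [hh0, hh0]; have := hslope; nlinarith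
  have h0A0 : h0 (A 0) = B 0 := by rw [hh0]; ring
  have h0A1 : h0 (A 1) = B 1 := by
    rw [hh0]
    rw [mul_div_assoc'] -- align
    rw [mul_comm (A 1 - A 0), mul_div_assoc]
    rw [div_self (by linarith : A 1 - A 0 ≠ 0)]
    ring
  have h0map : ∀ t ∈ Icc (A 0) (A 1), h0 t ∈ Icc (B 0) (B 1) := fun t ht =>
    ⟨h0A0 ▸ h0mono.monotone ht.1, h0A1 ▸ h0mono.monotone ht.2⟩
  -- the conjugating map
  set N : ℝ → ℤ := fun x => sSup {n : ℤ | A n ≤ x} with hNdef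
  have hNr : ∀ x, N x = sSup {n : ℤ | A n ≤ x} := fun x => rfl
  clear_value N
  set H : ℝ → ℝ := fun x =>
    if x ∈ Ioo p q then G (N x) (max r (min s (h0 (F (-N x) x)))) else if x ≤ p then r else s
    with hHdef
  have hHr : ∀ x, H x =
      if x ∈ Ioo p q then G (N x) (max r (min s (h0 (F (-N x) x)))) else if x ≤ p then r else s :=
    fun x => rfl
  clear_value H
  -- N characterization
  have hNval : ∀ (n : ℤ) (x : ℝ), A n ≤ x → x < A (n + 1) → N x = n := by
    intro n x h1 h2
    have hgreat : IsGreatest {k : ℤ | A k ≤ x} n := by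
      refine ⟨h1, fun k hk => ?_⟩
      by_contra hcon
      push_neg at hcon
      exact absurd (lt_of_le_of_lt (le_trans (hAmono.monotone (by omega : n + 1 ≤ k)) hk) h2)
        (lt_irrefl _)
    rw [hNr]
    exact hgreat.csSup_eq
  have hxIccOf : ∀ (n : ℤ) (x : ℝ), A n ≤ x → x ≤ A (n + 1) → x ∈ Icc p q :=
    fun n x h1 h2 => ⟨(hAIcc n).1.trans h1, h2.trans (hAIcc (n + 1)).2⟩
  have hxIooOf : ∀ (n : ℤ) (x : ℝ), A n ≤ x → x ≤ A (n + 1) → x ∈ Ioo p q :=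
    fun n x h1 h2 => ⟨(hAmem n).1.trans_le h1, lt_of_le_of_lt h2 (hAmem (n + 1)).2⟩
  -- shifting into the fundamental domain
  have hFblock : ∀ (n : ℤ) (x : ℝ), A n ≤ x → x ≤ A (n + 1) → F (-n) x ∈ Icc (A 0) (A 1) := by
    intro n x h1 h2
    have hxI : x ∈ Icc p q := hxIccOf n x h1 h2
    constructor
    · have := (hFmono (-n)).monotoneOn (hAIcc n) hxI h1
      rwa [hFA, show (-n + n : ℤ) = 0 by ring] at this
    · have := (hFmono (-n)).monotoneOn hxI (hAIcc (n + 1)) h2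
      rwa [hFA, show (-n + (n + 1) : ℤ) = 1 by ring] at this
  have hGblock : ∀ (n : ℤ) (y : ℝ), B n ≤ y → y ≤ B (n + 1) → G (-n) y ∈ Icc (B 0) (B 1) := by
    intro n y h1 h2
    have hyI : y ∈ Icc r s := ⟨(hBIcc n).1.trans h1, h2.trans (hBIcc (n + 1)).2⟩
    constructor
    · have := (hGmono (-n)).monotoneOn (hBIcc n) hyI h1
      rwa [hGB, show (-n + n : ℤ) = 0 by ring] at this
    · have := (hGmono (-n)).monotoneOn hyI (hBIcc (n + 1)) h2
      rwa [hGB, show (-n + (n + 1) : ℤ) = 1 by ring] at this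
  have hclampid : ∀ v ∈ Icc (B 0) (B 1), max r (min s v) = v := fun v hv => by
    rw [min_eq_right (hv.2.trans (hBmem 1).2.le), max_eq_right ((hBmem 0).1.le.trans hv.1)]
  have hh0mem : ∀ (n : ℤ) (x : ℝ), A n ≤ x → x ≤ A (n + 1) → h0 (F (-n) x) ∈ Icc (B 0) (B 1) :=
    fun n x h1 h2 => h0map _ (hFblock n x h1 h2)
  have hB01rs : Icc (B 0) (B 1) ⊆ Icc r s := Icc_subset_Icc (hBIcc 0).1 (hBIcc 1).2
  have hHblock : ∀ (n : ℤ) (x : ℝ), A n ≤ x → x ≤ A (n + 1) → H x = G n (h0 (F (-n) x)) := by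
    intro n x h1 h2
    rcases eq_or_lt_of_le h2 with heq | hlt
    · -- boundary case x = A (n+1)
      have hxIoo : x ∈ Ioo p q := heq ▸ hAmem (n + 1)
      have hN : N x = n + 1 := hNval (n + 1) x heq.ge (heq ▸ hAmono (by omega : n + 1 < n + 1 + 1))
      have hF1 : F (-(n + 1)) x = A 0 := by
        rw [heq, hFA, show (-(n + 1) + (n + 1) : ℤ) = 0 by ring]
      have hF2 : F (-n) x = A 1 := by
        rw [heq, hFA, show (-n + (n + 1) : ℤ) = 1 by ring]
      rw [hHr, if_pos hxIoo, hN, hF1, h0A0,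
        hclampid _ ⟨le_rfl, hB01.le⟩, hF2, h0A1, hGB, hGB]
      norm_num
    · have hxIoo : x ∈ Ioo p q := hxIooOf n x h1 h2
      have hN : N x = n := hNval n x h1 hlt
      rw [hHr, if_pos hxIoo, hN, hclampid _ (hh0mem n x h1 h2)]
  have hHA : ∀ k, H (A k) = B k := by
    intro k
    have h1 : A k ≤ A k := le_rfl
    have h2 : A k ≤ A (k + 1) := (hAmono (by omega : k < k + 1)).le
    rw [hHblock k (A k) h1 h2, hFA, show (-k + k : ℤ) = 0 by ring, h0A0, hGB, add_zero]
  have hHp : H p = r := by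
    rw [hHr, if_neg (fun hc => lt_irrefl p hc.1), if_pos le_rfl]
  have hHq : H q = s := by
    rw [hHr, if_neg (fun hc => lt_irrefl q hc.2), if_neg (not_le.2 hpq)]
  -- block range and monotonicity
  have hHrange : ∀ (n : ℤ) (x : ℝ), A n ≤ x → x ≤ A (n + 1) → H x ∈ Icc (B n) (B (n + 1)) := by
    intro n x h1 h2
    rw [hHblock n x h1 h2]
    have hv := hh0mem n x h1 h2
    constructor
    · have := (hGmono n).monotoneOn (hBIcc 0) (hB01rs hv) hv.1
      rwa [hGB, add_zero] at this
    · have := (hGmono n).monotoneOn (hB01rs hv) (hBIcc 1) hv.2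
      rwa [hGB] at this
  have hHblockMono : ∀ (n : ℤ) (x y : ℝ), A n ≤ x → x ≤ A (n + 1) → A n ≤ y → y ≤ A (n + 1) →
      x < y → H x < H y := by
    intro n x y hx1 hx2 hy1 hy2 hxy
    rw [hHblock n x hx1 hx2, hHblock n y hy1 hy2]
    have hxI := hxIccOf n x hx1 hx2
    have hyI := hxIccOf n y hy1 hy2
    have hFlt : F (-n) x < F (-n) y := hFmono (-n) hxI hyI hxy
    have h0lt : h0 (F (-n) x) < h0 (F (-n) y) := h0mono hFlt
    exact hGmono n (hB01rs (hh0mem n x hx1 hx2)) (hB01rs (hh0mem n y hy1 hy2)) h0lt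
  -- strict monotonicity
  have hHmono : StrictMonoOn H (Icc p q) := by
    intro x hx y hy hxy
    rcases eq_or_lt_of_le hx.1 with hxp | hxp
    · rw [← hxp, hHp]
      rcases eq_or_lt_of_le hy.2 with hyq | hyq
      · rw [hyq, hHq]; exact hrs
      · have hyIoo : y ∈ Ioo p q := ⟨hxp ▸ hxy, hyq⟩
        obtain ⟨n, h1, h2⟩ := hNexA y hyIoo
        exact lt_of_lt_of_le (hBmem n).1 (hHrange n y h1 h2.le).1
    · have hxIoo : x ∈ Ioo p q := ⟨hxp, lt_of_lt_of_le hxy hy.2⟩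
      obtain ⟨nx, hx1, hx2⟩ := hNexA x hxIoo
      rcases eq_or_lt_of_le hy.2 with hyq | hyq
      · rw [hyq, hHq]
        exact lt_of_le_of_lt (hHrange nx x hx1 hx2.le).2 (hBmem (nx + 1)).2
      · have hyIoo : y ∈ Ioo p q := ⟨hxp.trans hxy, hyq⟩
        obtain ⟨ny, hy1, hy2⟩ := hNexA y hyIoo
        have hnxny : nx ≤ ny := by
          by_contra hcon
          push_neg at hcon
          have : A (ny + 1) ≤ A nx := hAmono.monotone (by omega)
          linarith
        rcases eq_or_lt_of_le hnxny with heq | hlt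
        · subst heq
          exact hHblockMono nx x y hx1 hx2.le hy1 hy2.le hxy
        · have s1 : H x < B (nx + 1) := by
            rw [← hHA (nx + 1)]
            exact hHblockMono nx x (A (nx + 1)) hx1 hx2.le
              (hAmono.monotone (by omega)) le_rfl hx2
          have s2 : B (nx + 1) ≤ B ny := hBmono.monotone (by omega)
          exact lt_of_lt_of_le s1 (le_trans s2 (hHrange ny y hy1 hy2.le).1)
  -- maps to
  have hHmaps : MapsTo H (Icc p q) (Icc r s) := by
    intro x hx
    rcases eq_or_lt_of_le hx.1 with hxp | hxp
    · rw [← hxp, hHp]; exact ⟨le_rfl, hrs.le⟩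
    rcases eq_or_lt_of_le hx.2 with hxq | hxq
    · rw [hxq, hHq]; exact ⟨hrs.le, le_rfl⟩
    obtain ⟨n, h1, h2⟩ := hNexA x ⟨hxp, hxq⟩
    exact Icc_subset_Icc (hBIcc n).1 (hBIcc (n + 1)).2 (hHrange n x h1 h2.le)
  -- surjectivity
  have hHsurj : SurjOn H (Icc p q) (Icc r s) := by
    intro y hy
    rcases eq_or_lt_of_le hy.1 with hyr | hyr
    · exact ⟨p, ⟨le_rfl, hpq.le⟩, (hyr ▸ hHp : H p = y)⟩
    rcases eq_or_lt_of_le hy.2 with hys | hys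
    · exact ⟨q, ⟨hpq.le, le_rfl⟩, (hys ▸ hHq : H q = y)⟩
    obtain ⟨m, hm1, hm2⟩ := hNexB y ⟨hyr, hys⟩
    set t := G (-m) y with htdef
    have ht : t ∈ Icc (B 0) (B 1) := hGblock m y hm1 hm2.le
    set u := A 0 + (t - B 0) * ((A 1 - A 0) / (B 1 - B 0)) with hudef
    have hslope' : 0 < (A 1 - A 0) / (B 1 - B 0) := div_pos (by linarith) (by linarith)
    have hu : u ∈ Icc (A 0) (A 1) := by
      constructor
      · have : 0 ≤ (t - B 0) * ((A 1 - A 0) / (B 1 - B 0)) :=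
          mul_nonneg (by linarith [ht.1]) hslope'.le
        rw [hudef]; linarith
      · rw [hudef]
        have h1 : t - B 0 ≤ B 1 - B 0 := by linarith [ht.2]
        have h2 : (t - B 0) * ((A 1 - A 0) / (B 1 - B 0)) ≤
            (B 1 - B 0) * ((A 1 - A 0) / (B 1 - B 0)) :=
          mul_le_mul_of_nonneg_right h1 hslope'.le
        have h3 : (B 1 - B 0) * ((A 1 - A 0) / (B 1 - B 0)) = A 1 - A 0 := by
          rw [mul_comm]; exact div_mul_cancel₀ _ (by linarith)
        linarith
    have huI : u ∈ Icc p q := Icc_subset_Icc (hAIcc 0).1 (hAIcc 1).2 hu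
    have hh0u : h0 u = t := by
      rw [hh0, hudef]
      have hB10 : B 1 - B 0 ≠ 0 := by linarith
      have hA10 : A 1 - A 0 ≠ 0 := by linarith
      field_simp
      ring
    refine ⟨F m u, hFmem huI m, ?_⟩
    have hx1 : A m ≤ F m u := by
      have := (hFmono m).monotoneOn (hAIcc 0) huI hu.1
      rwa [hFA, add_zero] at this
    have hx2 : F m u ≤ A (m + 1) := by
      have := (hFmono m).monotoneOn huI (hAIcc 1) hu.2
      rwa [hFA] at this
    rw [hHblock m (F m u) hx1 hx2, hFadd huI, show (-m + m : ℤ) = 0 by ring,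
      hFzero huI, hh0u, htdef, hGadd (Ioo_subset_Icc_self ⟨hyr, hys⟩),
      show (m + -m : ℤ) = 0 by ring, hGzero (Ioo_subset_Icc_self ⟨hyr, hys⟩)]
  -- conjugacy
  have hHconj : ∀ x ∈ Icc p q, g (H x) = H (f x) := by
    intro x hx
    rcases eq_or_lt_of_le hx.1 with hxp | hxp
    · rw [← hxp, hHp, hgr, hfp, hHp]
    rcases eq_or_lt_of_le hx.2 with hxq | hxq
    · rw [hxq, hHq, hgs, hfq, hHq]
    have hxIoo : x ∈ Ioo p q := ⟨hxp, hxq⟩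
    obtain ⟨n, h1, h2⟩ := hNexA x hxIoo
    have hfx1 : A (n + 1) ≤ f x := by
      rw [← hAstep n]; exact hfm.monotoneOn (hAIcc n) hx h1
    have hfx2 : f x ≤ A (n + 1 + 1) := by
      rw [← hAstep (n + 1)]; exact hfm.monotoneOn hx (hAIcc (n + 1)) h2.le
    have hF1 : F (-(n + 1)) (f x) = F (-n) x := by
      rw [← hFone hx, hFadd hx, show (-(n + 1) + 1 : ℤ) = -n by ring]
    rw [hHblock (n + 1) (f x) hfx1 hfx2, hF1, hHblock n x h1 h2.le,
      hGconj (hB01rs (hh0mem n x h1 h2.le)) n]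
  exact ⟨H, hHmono, ⟨hHmaps, hHmono.injOn, hHsurj⟩, hHconj⟩

/-- an increasing homeomorphism below the diagonal and one above the
diagonal (both fixing exactly the endpoints of their compact intervals) are
conjugate via a decreasing homeomorphism. -/
theorem stmt_5
    (f g : ℝ → ℝ) (xL xR xbL xbR : ℝ)
    (hI : xL < xR) (hJ : xbL < xbR)
    (hgc : ContinuousOn g (Icc xL xR)) (hgm : StrictMonoOn g (Icc xL xR))
    (hgB : BijOn g (Icc xL xR) (Icc xL xR))
    (hfc : ContinuousOn f (Icc xbL xbR)) (hfm : StrictMonoOn f (Icc xbL xbR))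
    (hfB : BijOn f (Icc xbL xbR) (Icc xbL xbR))
    (hgd : ∀ x ∈ Ioo xL xR, g x < x)
    (hfd : ∀ x ∈ Ioo xbL xbR, x < f x)
    (hgfix : ∀ x ∈ Icc xL xR, g x = x ↔ x = xL ∨ x = xR)
    (hffix : ∀ x ∈ Icc xbL xbR, f x = x ↔ x = xbL ∨ x = xbR) :
    ∃ h : ℝ → ℝ, ContinuousOn h (Icc xbL xbR) ∧ StrictAntiOn h (Icc xbL xbR) ∧
      BijOn h (Icc xbL xbR) (Icc xL xR) ∧
      ∀ x ∈ Icc xbL xbR, g (h x) = h (f x) := by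
  have hmemIcc : ∀ {y : ℝ}, y ∈ Icc (-xR) (-xL) ↔ -y ∈ Icc xL xR := by
    intro y
    constructor <;> intro hy <;> exact ⟨by linarith [hy.1, hy.2], by linarith [hy.1, hy.2]⟩
  have hmemIoo : ∀ {y : ℝ}, y ∈ Ioo (-xR) (-xL) ↔ -y ∈ Ioo xL xR := by
    intro y
    constructor <;> intro hy <;> exact ⟨by linarith [hy.1, hy.2], by linarith [hy.1, hy.2]⟩
  have hg'c : ContinuousOn (fun y => -g (-y)) (Icc (-xR) (-xL)) := by
    apply ContinuousOn.neg
    exact hgc.comp continuousOn_neg (fun y hy => hmemIcc.1 hy)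
  have hg'm : StrictMonoOn (fun y => -g (-y)) (Icc (-xR) (-xL)) := by
    intro a ha b hb hab
    have := hgm (hmemIcc.1 hb) (hmemIcc.1 ha) (by linarith)
    simpa using this
  have hg'B : BijOn (fun y => -g (-y)) (Icc (-xR) (-xL)) (Icc (-xR) (-xL)) := by
    refine ⟨fun y hy => ?_, hg'm.injOn, fun z hz => ?_⟩
    · have := hgB.mapsTo (hmemIcc.1 hy)
      exact hmemIcc.2 (by simpa using this)
    · obtain ⟨w, hw, hgw⟩ := hgB.surjOn (hmemIcc.1 hz)
      refine ⟨-w, hmemIcc.2 (by simpa using hw), by simp [hgw]⟩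
  have hg'd : ∀ y ∈ Ioo (-xR) (-xL), y < -g (-y) := by
    intro y hy
    have := hgd (-y) (hmemIoo.1 hy)
    linarith
  have hg'fix : ∀ y ∈ Icc (-xR) (-xL), -g (-y) = y ↔ y = -xR ∨ y = -xL := by
    intro y hy
    rw [show (-g (-y) = y) ↔ (g (-y) = -y) by constructor <;> intro h <;> linarith]
    rw [hgfix (-y) (hmemIcc.1 hy)]
    constructor
    · rintro (h | h)
      · right; linarith
      · left; linarith
    · rintro (h | h)
      · right; linarith
      · left; linarith
  obtain ⟨H, hHmono, hHbij, hHconj⟩ :=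
    conj_mono f (fun y => -g (-y)) xbL xbR (-xR) (-xL) hJ (by linarith)
      hfc hfm hfB hfd hffix hg'c hg'm hg'B hg'd hg'fix
  have hHcont : ContinuousOn H (Icc xbL xbR) :=
    contOn_mono_surj hHmono hHbij.surjOn hHbij.mapsTo
  refine ⟨fun x => -H x, hHcont.neg, ?_, ?_, ?_⟩
  · intro x hx y hy hxy
    have := hHmono hx hy hxy
    simpa using this
  · refine ⟨fun x hx => ?_, ?_, fun z hz => ?_⟩
    · exact hmemIcc.1 (hHbij.mapsTo hx)
    · intro a ha b hb hab
      exact hHbij.injOn ha hb (by linarith [neg_injective hab])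
    · obtain ⟨x, hxm, hHx⟩ := hHbij.surjOn (show -z ∈ Icc (-xR) (-xL) by
        exact ⟨by linarith [hz.1, hz.2], by linarith [hz.1, hz.2]⟩)
      exact ⟨x, hxm, by simp [hHx]⟩
  · intro x hx
    have h1 := hHconj x hx
    have h2 : H x ∈ Icc (-xR) (-xL) := hHbij.mapsTo hx
    show g (-H x) = -H (f x)
    have h3 : -g (-H x) = H (f x) := h1
    linarith
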